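/- The point (26, 3120) on the elliptic curve E' : y² + y = x³ + x² − 64490x + 11396008 over ℚ has infinite order. -/

import Mathlib

open WeierstrassCurve.Affine WeierstrassCurve.Affine.Point

private abbrev Wq : WeierstrassCurve.Affine ℚ :=
  (⟨0, 1, 1, -64490, 11396008⟩ : WeierstrassCurve ℚ).toAffine

private lemma hWa1 : Wq.a₁ = 0 := rfl
private lemma hWa2 : Wq.a₂ = 1 := rfl
private lemma hWa3 : Wq.a₃ = 1 := rfl
private lemma hWa4 : Wq.a₄ = -64490 := rfl

-- valuation toolkit
private lemma two_zpow_inj : Function.Injective ((2:ℚ) ^ · : ℤ → ℚ) :=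
  zpow_right_injective₀ (by norm_num) (by norm_num)

private lemma v_mul {q r : ℚ} {a b : ℤ} (hq : padicNorm 2 q = 2 ^ a)
    (hr : padicNorm 2 r = 2 ^ b) : padicNorm 2 (q * r) = 2 ^ (a + b) := by
  rw [padicNorm.mul, hq, hr, zpow_add₀ (by norm_num : (2:ℚ) ≠ 0)]

private lemma v_div {q r : ℚ} {a b : ℤ} (hq : padicNorm 2 q = 2 ^ a)
    (hr : padicNorm 2 r = 2 ^ b) : padicNorm 2 (q / r) = 2 ^ (a - b) := by
  rw [padicNorm.div, hq, hr, zpow_sub₀ (by norm_num : (2:ℚ) ≠ 0)]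

private lemma v_add {q r : ℚ} {a b : ℤ} (hq : padicNorm 2 q = 2 ^ a)
    (hr : padicNorm 2 r = 2 ^ b) (hab : b < a) : padicNorm 2 (q + r) = 2 ^ a := by
  rw [padicNorm.add_eq_max_of_ne (p := 2)
      (by rw [hq, hr]; exact fun hh => hab.ne (two_zpow_inj hh).symm), hq, hr,
    max_eq_left (zpow_right_strictMono₀ (by norm_num : (1:ℚ) < 2) hab).le]

private lemma v_neg {q : ℚ} {a : ℤ} (hq : padicNorm 2 q = 2 ^ a) :
    padicNorm 2 (-q) = 2 ^ a := by rw [padicNorm.neg]; exact hq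

private lemma v_eq {q : ℚ} {a b : ℤ} (h : padicNorm 2 q = 2 ^ a) (hab : a = b) :
    padicNorm 2 q = 2 ^ b := hab ▸ h

private lemma v_odd {n : ℤ} (h : ¬ (2:ℤ) ∣ n) : padicNorm 2 (n : ℚ) = 2 ^ (0:ℤ) := by
  rw [zpow_zero]
  exact (padicNorm.int_eq_one_iff n).mpr h

private lemma v_two : padicNorm 2 (2 : ℚ) = 2 ^ (-1 : ℤ) := by
  have := padicNorm.padicNorm_p (p := 2) (by norm_num)
  push_cast at this
  rw [this, zpow_neg_one]

private lemma v_one : padicNorm 2 (1 : ℚ) = 2 ^ (0:ℤ) := by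
  rw [zpow_zero]; exact padicNorm.one

private lemma v_two_pow (k : ℕ) : padicNorm 2 ((2:ℚ) ^ k) = 2 ^ (-(k:ℤ)) := by
  induction k with
  | zero => simp [v_one]
  | succ k ih =>
    rw [pow_succ]
    refine v_eq (v_mul ih v_two) (by push_cast; ring)

/-- The key doubling step: if `v₂(x) = -2m`, `v₂(y) = -3m` with `m ≥ 1`, then the double of
the point has valuations `-2(m+1)`, `-3(m+1)`. -/
private lemma double_step {x y : ℚ} (h : Wq.Nonsingular x y) {m : ℤ} (hm : 1 ≤ m)
    (hx : padicNorm 2 x = 2 ^ (2*m)) (hy : padicNorm 2 y = 2 ^ (3*m)) :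
    ∃ (x' y' : ℚ) (h' : Wq.Nonsingular x' y'),
      Point.some _ _ h + Point.some _ _ h = Point.some _ _ h' ∧
      padicNorm 2 x' = 2 ^ (2*(m+1)) ∧ padicNorm 2 y' = 2 ^ (3*(m+1)) := by
  have hyneg : y ≠ Wq.negY x y := by
    intro hc
    have h2y : (2:ℚ) * y = -1 := by
      rw [negY, hWa1, hWa3] at hc; linarith
    have hv : padicNorm 2 ((2:ℚ) * y) = 2 ^ (-1 + 3*m) := v_mul v_two hy
    rw [h2y] at hv
    have hv1 : padicNorm 2 (-1 : ℚ) = 2 ^ (0:ℤ) := v_neg v_one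
    have := two_zpow_inj (hv1.symm.trans hv)
    omega
  set L := Wq.slope x x y y with hLdef
  have hL : L = (3*x^2 + (2*x + (-64490:ℚ))) / (2*y + 1) := by
    rw [hLdef, slope_of_Y_ne rfl hyneg, negY, hWa1, hWa2, hWa3, hWa4]
    congr 1 <;> ring
  -- numerator valuation
  have hv3 : padicNorm 2 (3:ℚ) = 2 ^ (0:ℤ) := by
    rw [show (3:ℚ) = ((3:ℤ):ℚ) by norm_num]; exact v_odd (by decide)
  have hx2 : padicNorm 2 (x ^ 2) = 2 ^ (2*m + 2*m) := by rw [sq]; exact v_mul hx hx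
  have t1 : padicNorm 2 (3 * x ^ 2) = 2 ^ (4*m) := v_eq (v_mul hv3 hx2) (by ring)
  have t2 : padicNorm 2 (2 * x) = 2 ^ (-1 + 2*m) := v_mul v_two hx
  have t2' : padicNorm 2 (-64490 : ℚ) = 2 ^ (-1 : ℤ) := by
    rw [show (-64490:ℚ) = 2 * ((-32245:ℤ):ℚ) by norm_num]
    exact v_eq (v_mul v_two (v_odd (by decide))) (by ring)
  have t3 : padicNorm 2 (2*x + (-64490:ℚ)) = 2 ^ (-1 + 2*m) := v_add t2 t2' (by omega)
  have t4 : padicNorm 2 (3*x^2 + (2*x + (-64490:ℚ))) = 2 ^ (4*m) := v_add t1 t3 (by omega)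
  have t5 : padicNorm 2 (2*y + 1) = 2 ^ (-1 + 3*m) :=
    v_add (v_mul v_two hy) v_one (by omega)
  have hvL : padicNorm 2 L = 2 ^ (m + 1) := by
    rw [hL]; exact v_eq (v_div t4 t5) (by ring)
  -- x-coordinate
  have hx'eq : Wq.addX x x L = L*L + (-(2*x) + -1) := by
    rw [addX, hWa1, hWa2]; ring
  have hvx' : padicNorm 2 (Wq.addX x x L) = 2 ^ (2*(m+1)) := by
    rw [hx'eq]
    exact v_eq (v_add (v_mul hvL hvL) (v_add (v_neg t2) (v_neg v_one) (by omega)) (by omega))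
      (by ring)
  -- y-coordinate
  have hy'eq : Wq.addY x x y L = -(L * (Wq.addX x x L + -x)) + (-y + -1) := by
    rw [addY, negAddY, negY, hWa1, hWa3]; ring
  have hvy' : padicNorm 2 (Wq.addY x x y L) = 2 ^ (3*(m+1)) := by
    rw [hy'eq]
    have hA : padicNorm 2 (-(L * (Wq.addX x x L + -x))) = 2 ^ ((m+1) + 2*(m+1)) :=
      v_neg (v_mul hvL (v_add hvx' (v_neg hx) (by omega)))
    exact v_eq (v_add hA (v_add (v_neg hy) (v_neg v_one) (by omega)) (by omega)) (by ring)
  exact ⟨_, _, nonsingular_add h h fun hxy => hyneg hxy.right, add_self_of_Y_ne hyneg, hvx', hvy'⟩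

private lemma iterate_step {x y : ℚ} (h : Wq.Nonsingular x y) {m : ℤ} (hm : 1 ≤ m)
    (hx : padicNorm 2 x = 2 ^ (2*m)) (hy : padicNorm 2 y = 2 ^ (3*m)) (k : ℕ) :
    ∃ (x' y' : ℚ) (h' : Wq.Nonsingular x' y'),
      (2^k : ℕ) • Point.some _ _ h = Point.some _ _ h' ∧
      padicNorm 2 x' = 2 ^ (2*(m+k)) ∧ padicNorm 2 y' = 2 ^ (3*(m+k)) := by
  induction k with
  | zero => exact ⟨x, y, h, by simp, by simpa using hx, by simpa using hy⟩
  | succ k ih =>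
    obtain ⟨x', y', h', he, hx', hy'⟩ := ih
    obtain ⟨x'', y'', h'', he2, hx'', hy''⟩ := double_step h' (by omega) hx' hy'
    refine ⟨x'', y'', h'', ?_, v_eq hx'' (by push_cast; ring), v_eq hy'' (by push_cast; ring)⟩
    rw [pow_succ, mul_nsmul, he, two_nsmul, he2]

/-- helper to compute a sum of two points with distinct `x`-coordinates -/
private lemma chain_ne {x1 y1 x2 y2 x3 y3 : ℚ} (h1 : Wq.Nonsingular x1 y1)
    (h2 : Wq.Nonsingular x2 y2) (hx : x1 ≠ x2)
    (e1 : Wq.addX x1 x2 (Wq.slope x1 x2 y1 y2) = x3)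
    (e2 : Wq.addY x1 x2 y1 (Wq.slope x1 x2 y1 y2) = y3) :
    ∃ h3 : Wq.Nonsingular x3 y3, Point.some _ _ h1 + Point.some _ _ h2 = Point.some _ _ h3 := by
  subst e1; subst e2
  exact ⟨_, add_of_X_ne hx⟩

private lemma chain_self {x1 y1 x3 y3 : ℚ} (h1 : Wq.Nonsingular x1 y1)
    (hy : y1 ≠ Wq.negY x1 y1)
    (e1 : Wq.addX x1 x1 (Wq.slope x1 x1 y1 y1) = x3)
    (e2 : Wq.addY x1 x1 y1 (Wq.slope x1 x1 y1 y1) = y3) :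
    ∃ h3 : Wq.Nonsingular x3 y3, Point.some _ _ h1 + Point.some _ _ h1 = Point.some _ _ h3 := by
  subst e1; subst e2
  exact ⟨_, add_self_of_Y_ne hy⟩

/-- the point `(26, 3120)` on the elliptic curve
`E' : y² + y = x³ + x² − 64490x + 11396008` (the quadratic twist of 11a1 by −79) has infinite
order in `E'(ℚ)`. -/
theorem stmt12
    (h : (⟨0, 1, 1, -64490, 11396008⟩ :
        WeierstrassCurve ℚ).toAffine.Nonsingular 26 3120) :
    ¬ IsOfFinAddOrder (WeierstrassCurve.Affine.Point.some _ _ h) := by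
  intro hfin
  have h1 : Wq.Nonsingular 26 3120 := h
  -- 2P
  have hy1 : (3120:ℚ) ≠ Wq.negY 26 3120 := by rw [negY, hWa1, hWa3]; norm_num
  have hs1 : Wq.slope 26 26 3120 3120 = -10 := by
    rw [slope_of_Y_ne rfl hy1, negY, hWa1, hWa2, hWa3, hWa4]; norm_num
  obtain ⟨h2, e2⟩ := chain_self h1 hy1
    (show _ = (47 : ℚ) by norm_num [hs1, addX, hWa1, hWa2])
    (show _ = (-2911 : ℚ) by norm_num [hs1, addY, negAddY, negY, addX, hWa1, hWa2, hWa3])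
  -- 3P
  have hs2 : Wq.slope 47 26 (-2911) 3120 = (-6031)/21 := by
    rw [slope_of_X_ne (by norm_num)]; norm_num
  obtain ⟨h3, e3⟩ := chain_ne h2 h1 (by norm_num)
    (show _ = (36340327/441 : ℚ) by norm_num [hs2, addX, hWa1, hWa2])
    (show _ = (219070457110/9261 : ℚ) by
      norm_num [hs2, addY, negAddY, negY, addX, hWa1, hWa2, hWa3])
  -- 4P
  have hs3 : Wq.slope (36340327/441) 26 (219070457110/9261) 3120 =
      (219041562790/9261) / (36328861/441) := by
    rw [slope_of_X_ne (by norm_num)]; norm_num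
  obtain ⟨h4, e4⟩ := chain_ne h3 h1 (by norm_num)
    (show _ = (118273466/33884041 : ℚ) by norm_num [hs3, addX, hWa1, hWa2])
    (show _ = (659132974619019/197239002661 : ℚ) by
      norm_num [hs3, addY, negAddY, negY, addX, hWa1, hWa2, hWa3])
  -- 5P
  have hs4 : Wq.slope (118273466/33884041) 26 (659132974619019/197239002661) 3120 =
      (43747286316699/197239002661) / (-762711600/33884041) := by
    rw [slope_of_X_ne (by norm_num)]; norm_num
  obtain ⟨h5, e5⟩ := chain_ne h4 h1 (by norm_num)
    (show _ = (87855731575400921/1319113344160000 : ℚ) by norm_num [hs4, addX, hWa1, hWa2])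
    (show _ = (-130358600567835370964490781/47909669014553536000000 : ℚ) by
      norm_num [hs4, addY, negAddY, negY, addX, hWa1, hWa2, hWa3])
  -- 5P is of finite additive order if P is
  have f2 : IsOfFinAddOrder (Point.some _ _ h2) := e2 ▸ hfin.add hfin
  have f3 : IsOfFinAddOrder (Point.some _ _ h3) := e3 ▸ f2.add hfin
  have f4 : IsOfFinAddOrder (Point.some _ _ h4) := e4 ▸ f3.add hfin
  have f5 : IsOfFinAddOrder (Point.some _ _ h5) := e5 ▸ f4.add hfin
  -- valuations of the coordinates of 5P
  have hvx5 : padicNorm 2 (87855731575400921/1319113344160000 : ℚ) = 2 ^ (2*(4:ℤ)) := by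
    rw [show (87855731575400921/1319113344160000 : ℚ) =
      ((87855731575400921:ℤ):ℚ) / ((2:ℚ)^8 * ((5152786500625:ℤ):ℚ)) by norm_num]
    have hd : padicNorm 2 ((2:ℚ)^8 * ((5152786500625:ℤ):ℚ)) = 2 ^ (-8 : ℤ) :=
      v_eq (v_mul (v_two_pow 8) (v_odd (by decide))) (by norm_num)
    exact v_eq (v_div (v_odd (by decide)) hd) (by norm_num)
  have hvy5 : padicNorm 2 (-130358600567835370964490781/47909669014553536000000 : ℚ) =
      2 ^ (3*(4:ℤ)) := by
    rw [show (-130358600567835370964490781/47909669014553536000000 : ℚ) =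
      ((-130358600567835370964490781:ℤ):ℚ) / ((2:ℚ)^12 * ((11696696536756234375:ℤ):ℚ))
      by norm_num]
    have hd : padicNorm 2 ((2:ℚ)^12 * ((11696696536756234375:ℤ):ℚ)) = 2 ^ (-12 : ℤ) :=
      v_eq (v_mul (v_two_pow 12) (v_odd (by decide))) (by norm_num)
    exact v_eq (v_div (v_odd (by decide)) hd) (by norm_num)
  -- iterate doubling on 5P
  have key := fun k => iterate_step h5 (by norm_num) hvx5 hvy5 k
  have hinj : Function.Injective (fun k : ℕ => (2^k : ℕ) • Point.some _ _ h5) := by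
    intro i j hij
    obtain ⟨xi, yi, hi, hei, hxi, -⟩ := key i
    obtain ⟨xj, yj, hj, hej, hxj, -⟩ := key j
    simp only at hij
    rw [hei, hej] at hij
    injection hij with hxx hyy
    rw [hxx] at hxi
    have := two_zpow_inj (hxi.symm.trans hxj)
    omega
  have hmem : ∀ k : ℕ, (2^k : ℕ) • Point.some _ _ h5 ∈
      (AddSubmonoid.multiples (Point.some _ _ h5) : Set Wq.Point) := fun k => ⟨2^k, rfl⟩
  exact Set.infinite_of_injective_forall_mem hinj hmem f5.finite_multiples
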